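/- If (J_n, X_n) satisfies: (A) X is a communicating class for J_n, (B) no instantaneous transitions (Q_{ij}(0) = 0 for all i,j), and (C_d) e_{ij}^{(d)} < ∞ for all i,j, then for any state k ≠ 0 the reduced Markov renewal process (_kJ_n, _kX_n) on X \ {k} also satisfies (A), (B), and (C_d). -/

import Mathlib

open MeasureTheory ENNReal ProbabilityTheory

/-- Prepend one step to a trajectory of a Markov renewal process. The path `ω` encodes
`ω n = (J_{n+1}, X_{n+1})`, so the state at time `r ≥ 1` is `(ω (r-1)).1`. -/
def consStep {X : Type*} (q : X × ℝ) (ω : ℕ → X × ℝ) : ℕ → X × ℝ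
  | 0 => q
  | n + 1 => ω n

/-- Successive times `ₖV_n` of visits of the embedded chain to the reduced space
`X \ {k}`. -/
noncomputable def renV {X : Type*} (k : X) (ω : ℕ → X × ℝ) : ℕ → ℕ
  | 0 => 0
  | n + 1 => sInf {r | renV k ω n < r ∧ (ω (r - 1)).1 ≠ k}

/-- The reduced embedded chain `ₖJ_n = J_{ₖV_n}` (for `n ≥ 1`). -/
noncomputable def redChain {X : Type*} (k : X) (ω : ℕ → X × ℝ) (n : ℕ) : X :=
  (ω (renV k ω n - 1)).1

/-- The reduced sojourn times `ₖX_n = ∑_{r = ₖV_{n-1}+1}^{ₖV_n} X_r`. -/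
noncomputable def redSojournSeq {X : Type*} (k : X) (ω : ℕ → X × ℝ) (n : ℕ) : ℝ :=
  ∑ s ∈ Finset.Ico (renV k ω (n - 1)) (renV k ω n), (ω s).2

section Aux
variable {m : ℕ}

-- lint_step deps
lemma meas_X (s : ℕ) : Measurable (fun ω : ℕ → Fin (m+1) × ℝ => (ω s).2) :=
  (measurable_pi_apply s).snd

/-- The event that the first `n` states are all `k`. -/
def Bset (k : Fin (m+1)) (n : ℕ) : Set (ℕ → Fin (m+1) × ℝ) := {ω | ∀ r < n, (ω r).1 = k}

lemma meas_J (s : ℕ) : Measurable (fun ω : ℕ → Fin (m+1) × ℝ => (ω s).1) :=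
  (measurable_pi_apply s).fst

lemma measurable_Bset (k : Fin (m+1)) (n : ℕ) : MeasurableSet (Bset k n) := by
  have : Bset k n = ⋂ r ∈ Finset.range n, {ω : ℕ → Fin (m+1) × ℝ | (ω r).1 = k} := by
    ext ω; simp [Bset]
  rw [this]
  exact Finset.measurableSet_biInter _ fun r _ => (meas_J r) (measurableSet_singleton k)

lemma consStep_mem_Bset_succ (k : Fin (m+1)) (q : Fin (m+1) × ℝ) (ω : ℕ → Fin (m+1) × ℝ)
    (n : ℕ) : consStep q ω ∈ Bset k (n+1) ↔ q.1 = k ∧ ω ∈ Bset k n := by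
  constructor
  · intro h
    refine ⟨h 0 (Nat.succ_pos n), fun r hr => h (r+1) (by omega)⟩
  · rintro ⟨h1, h2⟩ r hr
    cases r with
    | zero => exact h1
    | succ r => exact h2 r (by omega)

lemma renV_zero {X : Type*} (k : X) (ω : ℕ → X × ℝ) : renV k ω 0 = 0 := rfl

lemma renV_succ {X : Type*} (k : X) (ω : ℕ → X × ℝ) (n : ℕ) :
    renV k ω (n+1) = sInf {r | renV k ω n < r ∧ (ω (r - 1)).1 ≠ k} := rfl

lemma renV_one {X : Type*} (k : X) (ω : ℕ → X × ℝ) :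
    renV k ω 1 = sInf {r | 0 < r ∧ (ω (r - 1)).1 ≠ k} := rfl

lemma charT0 {k : Fin (m+1)} {ω : ℕ → Fin (m+1) × ℝ} :
    renV k ω 1 = 0 ↔ ∀ s, (ω s).1 = k := by
  rw [renV_one]
  constructor
  · intro h s
    rcases Nat.sInf_eq_zero.mp h with h0 | hemp
    · exact absurd h0.1 (lt_irrefl 0)
    · by_contra hs
      have : s + 1 ∈ {r | 0 < r ∧ (ω (r - 1)).1 ≠ k} := ⟨Nat.succ_pos s, by simpa using hs⟩
      rw [hemp] at this
      exact this
  · intro h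
    have : {r | 0 < r ∧ (ω (r - 1)).1 ≠ k} = ∅ := by
      ext r
      simp only [Set.mem_setOf_eq, Set.mem_empty_iff_false, iff_false, not_and]
      intro _ hne
      exact hne (h (r-1))
    rw [this, Nat.sInf_empty]

lemma charT_succ {k : Fin (m+1)} {ω : ℕ → Fin (m+1) × ℝ} {n : ℕ} :
    renV k ω 1 = n + 1 ↔ (ω ∈ Bset k n ∧ (ω n).1 ≠ k) := by
  rw [renV_one]
  constructor
  · intro h
    have hne : {r | 0 < r ∧ (ω (r - 1)).1 ≠ k}.Nonempty := by
      by_contra hc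
      rw [Set.not_nonempty_iff_eq_empty] at hc
      rw [hc, Nat.sInf_empty] at h
      exact Nat.succ_ne_zero n h.symm
    have hmem := Nat.sInf_mem hne
    rw [h] at hmem
    refine ⟨fun r hr => ?_, by simpa using hmem.2⟩
    have : r + 1 ∉ {r | 0 < r ∧ (ω (r - 1)).1 ≠ k} := Nat.notMem_of_lt_sInf (by omega)
    simp only [Set.mem_setOf_eq, not_and] at this
    by_contra hrk
    exact this (Nat.succ_pos r) (by simpa using hrk)
  · rintro ⟨hB, hn⟩
    apply le_antisymm
    · exact Nat.sInf_le ⟨Nat.succ_pos n, by simpa using hn⟩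
    · refine le_csInf ⟨n+1, Nat.succ_pos n, by simpa using hn⟩ fun b hb => ?_
      by_contra hbn
      push_neg at hbn
      have hb1 : 1 ≤ b := hb.1
      have : (ω (b-1)).1 = k := hB (b-1) (by omega)
      exact hb.2 this

lemma measurable_T_eq (k : Fin (m+1)) (n : ℕ) :
    MeasurableSet {ω : ℕ → Fin (m+1) × ℝ | renV k ω 1 = n} := by
  cases n with
  | zero =>
    have : {ω : ℕ → Fin (m+1) × ℝ | renV k ω 1 = 0} =
        ⋂ s : ℕ, {ω : ℕ → Fin (m+1) × ℝ | (ω s).1 = k} := by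
      ext ω; simp [charT0]
    rw [this]
    exact MeasurableSet.iInter fun s => (meas_J s) (measurableSet_singleton k)
  | succ n =>
    have : {ω : ℕ → Fin (m+1) × ℝ | renV k ω 1 = n + 1} =
        Bset k n ∩ {ω : ℕ → Fin (m+1) × ℝ | (ω n).1 ≠ k} := by
      ext ω; simp [charT_succ]
    rw [this]
    exact (measurable_Bset k n).inter (((meas_J n) (measurableSet_singleton k)).compl)

lemma meas_consStep_pair :
    Measurable (fun p : (Fin (m+1) × ℝ) × (ℕ → Fin (m+1) × ℝ) => consStep p.1 p.2) := by
  apply measurable_pi_lambda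
  intro n
  cases n with
  | zero => exact measurable_fst
  | succ n => exact (measurable_pi_apply n).comp measurable_snd

lemma meas_consStep (q : Fin (m+1) × ℝ) : Measurable (consStep q) := by
  apply measurable_pi_lambda
  intro n
  cases n with
  | zero => exact measurable_const
  | succ n => exact measurable_pi_apply n

lemma lint_step (Q : Fin (m+1) → Measure (Fin (m+1) × ℝ))
    (μ : Fin (m+1) → Measure (ℕ → Fin (m+1) × ℝ))
    (hprob : ∀ i, IsProbabilityMeasure (μ i))
    (hMRP : ∀ (i : Fin (m + 1)) (A : Set (ℕ → Fin (m + 1) × ℝ)), MeasurableSet A →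
      μ i A = ∫⁻ q, μ q.1 {ω | consStep q ω ∈ A} ∂ Q i)
    (i : Fin (m+1)) {g : (ℕ → Fin (m+1) × ℝ) → ℝ≥0∞} (hg : Measurable g) :
    ∫⁻ ω, g ω ∂ μ i = ∫⁻ q, ∫⁻ ω, g (consStep q ω) ∂ μ q.1 ∂ Q i := by
  have hμmeas : Measurable (fun q : Fin (m+1) × ℝ => μ q.1) :=
    (measurable_from_top (f := μ)).comp measurable_fst
  let κ₀ : Kernel (Fin (m+1) × ℝ) (ℕ → Fin (m+1) × ℝ) := ⟨fun q => μ q.1, hμmeas⟩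
  haveI : IsMarkovKernel κ₀ := ⟨fun q => hprob q.1⟩
  let η : Kernel (Fin (m+1) × ℝ) (ℕ → Fin (m+1) × ℝ) :=
    (Kernel.deterministic id measurable_id ×ₖ κ₀).map (fun p => consStep p.1 p.2)
  have hη : ∀ q, η q = (μ q.1).map (consStep q) := by
    intro q
    haveI := hprob q.1
    ext A hA
    rw [Measure.map_apply (meas_consStep q) hA]
    show ((Kernel.deterministic id measurable_id ×ₖ κ₀).map (fun p => consStep p.1 p.2)) q A = _
    rw [Kernel.map_apply' _ meas_consStep_pair _ hA, Kernel.prod_apply,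
      Kernel.deterministic_apply]
    have : (κ₀ q : Measure (ℕ → Fin (m+1) × ℝ)) = μ q.1 := rfl
    rw [this, Measure.dirac_prod,
      Measure.map_apply measurable_prodMk_left (meas_consStep_pair hA)]
    rfl
  have hbind : μ i = (Q i).bind η := by
    ext A hA
    rw [Measure.bind_apply hA (η.measurable.aemeasurable), hMRP i A hA]
    refine lintegral_congr fun q => ?_
    rw [hη q, Measure.map_apply (meas_consStep q) hA]
    rfl
  rw [hbind, Measure.lintegral_bind η.measurable.aemeasurable hg.aemeasurable]
  refine lintegral_congr fun q => ?_
  rw [hη q, lintegral_map hg (meas_consStep q)]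

end Aux

section Aux2
variable {m : ℕ} (Q : Fin (m+1) → Measure (Fin (m+1) × ℝ))
  (μ : Fin (m+1) → Measure (ℕ → Fin (m+1) × ℝ))

lemma meas_fstk (k : Fin (m+1)) : MeasurableSet {q : Fin (m+1) × ℝ | q.1 = k} :=
  measurable_fst (measurableSet_singleton k)

variable (hQ : ∀ i, IsProbabilityMeasure (Q i))
  (hprob : ∀ i, IsProbabilityMeasure (μ i))
  (hMRP : ∀ (i : Fin (m + 1)) (A : Set (ℕ → Fin (m + 1) × ℝ)), MeasurableSet A →
    μ i A = ∫⁻ q, μ q.1 {ω | consStep q ω ∈ A} ∂ Q i)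

include hMRP in
set_option linter.unusedSectionVars false in
lemma muB_succ (k i : Fin (m+1)) (n : ℕ) :
    μ i (Bset k (n+1)) = Q i {q | q.1 = k} * μ k (Bset k n) := by
  rw [hMRP i _ (measurable_Bset k (n+1))]
  have h1 : ∀ q : Fin (m+1) × ℝ, μ q.1 {ω | consStep q ω ∈ Bset k (n+1)} =
      Set.indicator {q' : Fin (m+1) × ℝ | q'.1 = k} (fun _ => μ k (Bset k n)) q := by
    intro q
    by_cases h : q.1 = k
    · rw [Set.indicator_of_mem (show q ∈ {q' : Fin (m+1) × ℝ | q'.1 = k} from h)]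
      have : {ω | consStep q ω ∈ Bset k (n+1)} = Bset k n := by
        ext ω; rw [Set.mem_setOf_eq, consStep_mem_Bset_succ]; simp [h]
      rw [this, h]
    · rw [Set.indicator_of_notMem (show q ∉ {q' : Fin (m+1) × ℝ | q'.1 = k} from h)]
      have : {ω | consStep q ω ∈ Bset k (n+1)} = ∅ := by
        ext ω; rw [Set.mem_setOf_eq, consStep_mem_Bset_succ]; simp [h]
      rw [this, measure_empty]
  rw [lintegral_congr h1, lintegral_indicator_const (meas_fstk k), mul_comm]

include hQ hprob hMRP in
set_option linter.unusedSectionVars false in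
lemma muB_k (k : Fin (m+1)) (n : ℕ) :
    μ k (Bset k n) = (Q k {q | q.1 = k}) ^ n := by
  induction n with
  | zero =>
    have : Bset k 0 = Set.univ := by ext ω; simp [Bset]
    rw [this, pow_zero]
    exact (hprob k).measure_univ
  | succ n ih => rw [muB_succ Q μ hMRP, ih, pow_succ, mul_comm]

include hQ hprob hMRP in
lemma muB_le (k i : Fin (m+1)) (n : ℕ) :
    μ i (Bset k (n+1)) ≤ (Q k {q | q.1 = k}) ^ n := by
  rw [muB_succ Q μ hMRP, muB_k Q μ hQ hprob hMRP]
  calc Q i {q | q.1 = k} * (Q k {q | q.1 = k}) ^ n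
      ≤ 1 * (Q k {q | q.1 = k}) ^ n := by
        gcongr
        exact prob_le_one
    _ = _ := one_mul _

include hQ hprob hMRP in
lemma p_lt_one (hA : ∀ i j : Fin (m + 1), ∃ n, 1 ≤ n ∧ 0 < μ i {ω | (ω (n - 1)).1 = j})
    (k : Fin (m+1)) (hk : k ≠ 0) : Q k {q | q.1 = k} < 1 := by
  obtain ⟨n, hn1, hpos⟩ := hA k 0
  refine lt_of_le_of_ne prob_le_one ?_
  intro hp1
  haveI := hprob k
  have hB1 : μ k (Bset k n) = 1 := by
    rw [muB_k Q μ hQ hprob hMRP, hp1, one_pow]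
  have hsub : {ω : ℕ → Fin (m+1) × ℝ | (ω (n-1)).1 = 0} ⊆ (Bset k n)ᶜ := by
    intro ω hω hmem
    exact hk (((hmem (n-1) (by omega)).symm.trans hω))
  have hcompl : μ k (Bset k n)ᶜ = 0 := by
    rw [measure_compl (measurable_Bset k n) (measure_ne_top _ _), hB1,
      (hprob k).measure_univ, tsub_self]
  have := measure_mono (μ := μ k) hsub
  rw [hcompl] at this
  exact absurd (lt_of_lt_of_le hpos this) (lt_irrefl 0)

include hQ hprob hMRP in
lemma muT0 (hA : ∀ i j : Fin (m + 1), ∃ n, 1 ≤ n ∧ 0 < μ i {ω | (ω (n - 1)).1 = j})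
    (k : Fin (m+1)) (hk : k ≠ 0) (i : Fin (m+1)) :
    μ i {ω : ℕ → Fin (m+1) × ℝ | renV k ω 1 = 0} = 0 := by
  have hle : ∀ n, μ i {ω : ℕ → Fin (m+1) × ℝ | renV k ω 1 = 0} ≤ (Q k {q | q.1 = k}) ^ n := by
    intro n
    have hsub : {ω : ℕ → Fin (m+1) × ℝ | renV k ω 1 = 0} ⊆ Bset k (n+1) :=
      fun ω hω r _ => (charT0.mp hω) r
    exact le_trans (measure_mono (μ := μ i) hsub) (muB_le Q μ hQ hprob hMRP k i n)
  refine le_antisymm ?_ (zero_le)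
  exact ge_of_tendsto'
    (ENNReal.tendsto_pow_atTop_nhds_zero_of_lt_one (p_lt_one Q μ hQ hprob hMRP hA k hk)) hle

include hprob hMRP in
lemma muXle0 (hB : ∀ i, Q i {q | q.2 ≤ 0} = 0) :
    ∀ (s : ℕ) (i : Fin (m+1)), μ i {ω : ℕ → Fin (m+1) × ℝ | (ω s).2 ≤ 0} = 0 := by
  intro s
  induction s with
  | zero =>
    intro i
    have hms : MeasurableSet {ω : ℕ → Fin (m+1) × ℝ | (ω 0).2 ≤ 0} :=
      measurableSet_le ((measurable_pi_apply 0).snd) measurable_const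
    rw [hMRP i {ω : ℕ → Fin (m+1) × ℝ | (ω 0).2 ≤ 0} hms]
    have h1 : ∀ q : Fin (m+1) × ℝ,
        μ q.1 {ω | consStep q ω ∈ {ω' : ℕ → Fin (m+1) × ℝ | (ω' 0).2 ≤ 0}} =
        Set.indicator {q' : Fin (m+1) × ℝ | q'.2 ≤ 0} (fun _ => 1) q := by
      intro q
      haveI := hprob q.1
      by_cases h : q.2 ≤ 0
      · rw [Set.indicator_of_mem (show q ∈ {q' : Fin (m+1) × ℝ | q'.2 ≤ 0} from h)]
        have : {ω | consStep q ω ∈ {ω' : ℕ → Fin (m+1) × ℝ | (ω' 0).2 ≤ 0}} =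
            (Set.univ : Set (ℕ → Fin (m+1) × ℝ)) := by
          ext ω; simpa [consStep] using h
        rw [this, measure_univ]
      · rw [Set.indicator_of_notMem (show q ∉ {q' : Fin (m+1) × ℝ | q'.2 ≤ 0} from h)]
        have : {ω | consStep q ω ∈ {ω' : ℕ → Fin (m+1) × ℝ | (ω' 0).2 ≤ 0}} =
            (∅ : Set (ℕ → Fin (m+1) × ℝ)) := by
          ext ω; simpa [consStep] using h
        rw [this, measure_empty]
    rw [lintegral_congr h1,
      lintegral_indicator_const (measurableSet_le measurable_snd measurable_const), one_mul]
    exact hB i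
  | succ s ih =>
    intro i
    have hms : MeasurableSet {ω : ℕ → Fin (m+1) × ℝ | (ω (s+1)).2 ≤ 0} :=
      measurableSet_le ((measurable_pi_apply (s+1)).snd) measurable_const
    rw [hMRP i {ω : ℕ → Fin (m+1) × ℝ | (ω (s+1)).2 ≤ 0} hms]
    have h1 : ∀ q : Fin (m+1) × ℝ,
        μ q.1 {ω | consStep q ω ∈ {ω' : ℕ → Fin (m+1) × ℝ | (ω' (s+1)).2 ≤ 0}} = 0 := by
      intro q
      have : {ω | consStep q ω ∈ {ω' : ℕ → Fin (m+1) × ℝ | (ω' (s+1)).2 ≤ 0}} =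
          {ω : ℕ → Fin (m+1) × ℝ | (ω s).2 ≤ 0} := rfl
      rw [this, ih q.1]
    rw [lintegral_congr h1, lintegral_zero]

end Aux2

section Moments
variable {m : ℕ} (d : ℕ) (Q : Fin (m+1) → Measure (Fin (m+1) × ℝ))
  (μ : Fin (m+1) → Measure (ℕ → Fin (m+1) × ℝ))
  (hQ : ∀ i, IsProbabilityMeasure (Q i))
  (hprob : ∀ i, IsProbabilityMeasure (μ i))
  (hMRP : ∀ (i : Fin (m + 1)) (A : Set (ℕ → Fin (m + 1) × ℝ)), MeasurableSet A →
    μ i A = ∫⁻ q, μ q.1 {ω | consStep q ω ∈ A} ∂ Q i)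

/-- `Cmax`: a uniform bound for the full `d`-th moments of the sojourn kernel. -/
noncomputable def Cmax : ℝ≥0∞ := ∑ i : Fin (m+1), ∫⁻ q, (ENNReal.ofReal q.2) ^ d ∂ Q i

lemma meas_integrand : Measurable (fun q : Fin (m+1) × ℝ => (ENNReal.ofReal q.2) ^ d) :=
  (measurable_snd.ennreal_ofReal).pow_const d

lemma Qi_le_Cmax (i : Fin (m+1)) :
    ∫⁻ q, (ENNReal.ofReal q.2) ^ d ∂ Q i ≤ Cmax d Q :=
  Finset.single_le_sum (f := fun i => ∫⁻ q, (ENNReal.ofReal q.2) ^ d ∂ Q i)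
    (fun _ _ => zero_le) (Finset.mem_univ i)

lemma Cmax_ne_top (hC : ∀ i j, ∫⁻ q in {q | q.1 = j}, (ENNReal.ofReal q.2) ^ d ∂ Q i ≠ ⊤) :
    Cmax d Q ≠ ⊤ := by
  rw [Cmax]
  refine (lt_of_le_of_lt (Finset.sum_le_sum (fun i _ => ?_))
    (lt_of_le_of_lt (le_refl (∑ i : Fin (m+1), ∑ j : Fin (m+1),
      ∫⁻ q in {q | q.1 = j}, (ENNReal.ofReal q.2) ^ d ∂ Q i)) ?_)).ne
  · -- ∫ f ∂ Q i ≤ ∑ j ∫ over {q.1 = j}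
    have hdec : ∀ q : Fin (m+1) × ℝ, (ENNReal.ofReal q.2) ^ d =
        ∑ j : Fin (m+1), Set.indicator {q' : Fin (m+1) × ℝ | q'.1 = j}
          (fun q' => (ENNReal.ofReal q'.2) ^ d) q := by
      intro q
      rw [Finset.sum_eq_single q.1]
      · rw [Set.indicator_of_mem (show q ∈ {q' : Fin (m+1) × ℝ | q'.1 = q.1} from rfl)]
      · intro j _ hj
        refine Set.indicator_of_notMem ?_ _
        simp only [Set.mem_setOf_eq]
        exact fun h => hj h.symm
      · intro h; exact absurd (Finset.mem_univ q.1) h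
    calc ∫⁻ q, (ENNReal.ofReal q.2) ^ d ∂ Q i
        = ∫⁻ q, ∑ j : Fin (m+1), Set.indicator {q' : Fin (m+1) × ℝ | q'.1 = j}
            (fun q' => (ENNReal.ofReal q'.2) ^ d) q ∂ Q i := lintegral_congr hdec
      _ = ∑ j : Fin (m+1), ∫⁻ q, Set.indicator {q' : Fin (m+1) × ℝ | q'.1 = j}
            (fun q' => (ENNReal.ofReal q'.2) ^ d) q ∂ Q i :=
          lintegral_finset_sum _ (fun j _ => (meas_integrand d).indicator (meas_fstk j))
      _ = ∑ j : Fin (m+1), ∫⁻ q in {q' : Fin (m+1) × ℝ | q'.1 = j},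
            (ENNReal.ofReal q.2) ^ d ∂ Q i := by
          refine Finset.sum_congr rfl (fun j _ => ?_)
          rw [lintegral_indicator (meas_fstk j)]
      _ ≤ _ := le_refl _
  · refine ENNReal.sum_lt_top.mpr (fun i _ => ENNReal.sum_lt_top.mpr (fun j _ => ?_))
    exact (hC i j).lt_top

/-- The basic quantity in the moment recursion. -/
noncomputable def Gm (k : Fin (m+1)) (i : Fin (m+1)) (ms s : ℕ) : ℝ≥0∞ :=
  ∫⁻ ω in Bset k ms, (ENNReal.ofReal ((ω s).2)) ^ d ∂ μ i

lemma meas_Gm_integrand (s : ℕ) :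
    Measurable (fun ω : ℕ → Fin (m+1) × ℝ => (ENNReal.ofReal ((ω s).2)) ^ d) :=
  ((meas_X s).ennreal_ofReal).pow_const d

include hprob hMRP in
lemma Gm_zero_zero (i : Fin (m+1)) :
    Gm d μ k i 0 0 = ∫⁻ q, (ENNReal.ofReal q.2) ^ d ∂ Q i := by
  have hB0 : Bset k 0 = (Set.univ : Set (ℕ → Fin (m+1) × ℝ)) := by ext ω; simp [Bset]
  rw [Gm, hB0, Measure.restrict_univ,
    lint_step Q μ hprob hMRP i (meas_Gm_integrand d 0)]
  refine lintegral_congr fun q => ?_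
  haveI := hprob q.1
  have : (fun ω : ℕ → Fin (m+1) × ℝ => (ENNReal.ofReal ((consStep q ω 0).2)) ^ d) =
      fun _ => (ENNReal.ofReal q.2) ^ d := rfl
  rw [this, lintegral_const, measure_univ, mul_one]

include hprob hMRP in
lemma Gm_succ_succ (k i : Fin (m+1)) (ms s : ℕ) :
    Gm d μ k i (ms+1) (s+1) = Q i {q | q.1 = k} * Gm d μ k k ms s := by
  have key : ∫⁻ ω, (Bset k (ms+1)).indicator
      (fun ω => (ENNReal.ofReal ((ω (s+1)).2)) ^ d) ω ∂ μ i =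
      ∫⁻ q, ∫⁻ ω, (Bset k (ms+1)).indicator
        (fun ω => (ENNReal.ofReal ((ω (s+1)).2)) ^ d) (consStep q ω) ∂ μ q.1 ∂ Q i :=
    lint_step Q μ hprob hMRP i ((meas_Gm_integrand d (s+1)).indicator (measurable_Bset k (ms+1)))
  have hinner : ∀ q : Fin (m+1) × ℝ,
      (∫⁻ ω, (Bset k (ms+1)).indicator
        (fun ω => (ENNReal.ofReal ((ω (s+1)).2)) ^ d) (consStep q ω) ∂ μ q.1) =
      Set.indicator {q' : Fin (m+1) × ℝ | q'.1 = k} (fun _ => Gm d μ k k ms s) q := by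
    intro q
    by_cases h : q.1 = k
    · rw [Set.indicator_of_mem (show q ∈ {q' : Fin (m+1) × ℝ | q'.1 = k} from h)]
      have heq : (fun ω => (Bset k (ms+1)).indicator
          (fun ω => (ENNReal.ofReal ((ω (s+1)).2)) ^ d) (consStep q ω)) =
          (Bset k ms).indicator (fun ω : ℕ → Fin (m+1) × ℝ => (ENNReal.ofReal ((ω s).2)) ^ d) := by
        funext ω
        by_cases hω : ω ∈ Bset k ms
        · rw [Set.indicator_of_mem ((consStep_mem_Bset_succ k q ω ms).mpr ⟨h, hω⟩),
            Set.indicator_of_mem hω]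
          rfl
        · rw [Set.indicator_of_notMem (fun hc => hω ((consStep_mem_Bset_succ k q ω ms).mp hc).2),
            Set.indicator_of_notMem hω]
      rw [heq, lintegral_indicator (measurable_Bset k ms), h]
      rfl
    · rw [Set.indicator_of_notMem (show q ∉ {q' : Fin (m+1) × ℝ | q'.1 = k} from h)]
      have heq : (fun ω => (Bset k (ms+1)).indicator
          (fun ω => (ENNReal.ofReal ((ω (s+1)).2)) ^ d) (consStep q ω)) =
          (fun _ : ℕ → Fin (m+1) × ℝ => (0 : ℝ≥0∞)) := by
        funext ω
        exact Set.indicator_of_notMem (fun hc => h ((consStep_mem_Bset_succ k q ω ms).mp hc).1) _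
      rw [heq, lintegral_zero]
  rw [Gm, ← lintegral_indicator (measurable_Bset k (ms+1)), key, lintegral_congr hinner,
    lintegral_indicator_const (meas_fstk k), mul_comm]

include hprob hMRP in
lemma Gm_succ_zero (k i : Fin (m+1)) (ms : ℕ) :
    Gm d μ k i (ms+1) 0 =
      (∫⁻ q in {q' : Fin (m+1) × ℝ | q'.1 = k}, (ENNReal.ofReal q.2) ^ d ∂ Q i)
        * μ k (Bset k ms) := by
  have key : ∫⁻ ω, (Bset k (ms+1)).indicator
      (fun ω => (ENNReal.ofReal ((ω 0).2)) ^ d) ω ∂ μ i =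
      ∫⁻ q, ∫⁻ ω, (Bset k (ms+1)).indicator
        (fun ω => (ENNReal.ofReal ((ω 0).2)) ^ d) (consStep q ω) ∂ μ q.1 ∂ Q i :=
    lint_step Q μ hprob hMRP i ((meas_Gm_integrand d 0).indicator (measurable_Bset k (ms+1)))
  have hinner : ∀ q : Fin (m+1) × ℝ,
      (∫⁻ ω, (Bset k (ms+1)).indicator
        (fun ω => (ENNReal.ofReal ((ω 0).2)) ^ d) (consStep q ω) ∂ μ q.1) =
      Set.indicator {q' : Fin (m+1) × ℝ | q'.1 = k}
        (fun q' => (ENNReal.ofReal q'.2) ^ d * μ k (Bset k ms)) q := by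
    intro q
    by_cases h : q.1 = k
    · rw [Set.indicator_of_mem (show q ∈ {q' : Fin (m+1) × ℝ | q'.1 = k} from h)]
      have heq : (fun ω => (Bset k (ms+1)).indicator
          (fun ω => (ENNReal.ofReal ((ω 0).2)) ^ d) (consStep q ω)) =
          (Bset k ms).indicator (fun _ : ℕ → Fin (m+1) × ℝ => (ENNReal.ofReal q.2) ^ d) := by
        funext ω
        by_cases hω : ω ∈ Bset k ms
        · rw [Set.indicator_of_mem ((consStep_mem_Bset_succ k q ω ms).mpr ⟨h, hω⟩),
            Set.indicator_of_mem hω]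
          rfl
        · rw [Set.indicator_of_notMem (fun hc => hω ((consStep_mem_Bset_succ k q ω ms).mp hc).2),
            Set.indicator_of_notMem hω]
      rw [heq, lintegral_indicator_const (measurable_Bset k ms), h]
    · rw [Set.indicator_of_notMem (show q ∉ {q' : Fin (m+1) × ℝ | q'.1 = k} from h)]
      have heq : (fun ω => (Bset k (ms+1)).indicator
          (fun ω => (ENNReal.ofReal ((ω 0).2)) ^ d) (consStep q ω)) =
          (fun _ : ℕ → Fin (m+1) × ℝ => (0 : ℝ≥0∞)) := by
        funext ω
        exact Set.indicator_of_notMem (fun hc => h ((consStep_mem_Bset_succ k q ω ms).mp hc).1) _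
      rw [heq, lintegral_zero]
  rw [Gm, ← lintegral_indicator (measurable_Bset k (ms+1)), key, lintegral_congr hinner,
    lintegral_indicator (meas_fstk k),
    lintegral_mul_const _ (meas_integrand d)]
end Moments

section Bounds
variable {m : ℕ} (d : ℕ) (Q : Fin (m+1) → Measure (Fin (m+1) × ℝ))
  (μ : Fin (m+1) → Measure (ℕ → Fin (m+1) × ℝ))
  (hQ : ∀ i, IsProbabilityMeasure (Q i))
  (hprob : ∀ i, IsProbabilityMeasure (μ i))
  (hMRP : ∀ (i : Fin (m + 1)) (A : Set (ℕ → Fin (m + 1) × ℝ)), MeasurableSet A →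
    μ i A = ∫⁻ q, μ q.1 {ω | consStep q ω ∈ A} ∂ Q i)

include hQ hprob hMRP in
lemma Gm_k_le (k : Fin (m+1)) :
    ∀ s ms : ℕ, s ≤ ms → Gm d μ k k ms s ≤ Cmax d Q * (Q k {q | q.1 = k}) ^ (ms - 1) := by
  intro s
  induction s with
  | zero =>
    intro ms _
    cases ms with
    | zero =>
      rw [Gm_zero_zero d Q μ hprob hMRP]
      simpa using Qi_le_Cmax d Q k
    | succ ms =>
      rw [Gm_succ_zero d Q μ hprob hMRP, muB_k Q μ hQ hprob hMRP]
      simp only [Nat.add_sub_cancel]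
      gcongr
      exact le_trans (lintegral_mono_set (Set.subset_univ _))
        (by rw [Measure.restrict_univ]; exact Qi_le_Cmax d Q k)
  | succ s ih =>
    intro ms hs
    cases ms with
    | zero => omega
    | succ ms =>
      rw [Gm_succ_succ d Q μ hprob hMRP]
      have h1 : Gm d μ k k ms s ≤ Cmax d Q * (Q k {q | q.1 = k}) ^ (ms - 1) := ih ms (by omega)
      calc Q k {q | q.1 = k} * Gm d μ k k ms s
          ≤ Q k {q | q.1 = k} * (Cmax d Q * (Q k {q | q.1 = k}) ^ (ms - 1)) := by gcongr
        _ ≤ Cmax d Q * (Q k {q | q.1 = k}) ^ ((ms + 1) - 1) := by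
            rw [Nat.add_sub_cancel]
            rw [← mul_assoc, mul_comm (Q k {q | q.1 = k}) (Cmax d Q), mul_assoc]
            gcongr
            cases ms with
            | zero =>
              simpa using prob_le_one
            | succ ms =>
              rw [Nat.add_sub_cancel, ← pow_succ']

include hQ hprob hMRP in
lemma Gm_i_le (k : Fin (m+1)) (i : Fin (m+1)) :
    ∀ s ms : ℕ, s ≤ ms → Gm d μ k i ms s ≤ Cmax d Q * (Q k {q | q.1 = k}) ^ (ms - 2) := by
  have hp1 : Q k {q | q.1 = k} ≤ 1 := prob_le_one
  intro s ms hs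
  cases s with
  | zero =>
    cases ms with
    | zero =>
      rw [Gm_zero_zero d Q μ hprob hMRP]
      simpa using Qi_le_Cmax d Q i
    | succ ms =>
      rw [Gm_succ_zero d Q μ hprob hMRP, muB_k Q μ hQ hprob hMRP]
      calc (∫⁻ q in {q' : Fin (m+1) × ℝ | q'.1 = k}, (ENNReal.ofReal q.2) ^ d ∂ Q i)
            * (Q k {q | q.1 = k}) ^ ms
          ≤ Cmax d Q * (Q k {q | q.1 = k}) ^ ms := by
            gcongr
            exact le_trans (lintegral_mono_set (Set.subset_univ _))
              (by rw [Measure.restrict_univ]; exact Qi_le_Cmax d Q i)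
        _ ≤ Cmax d Q * (Q k {q | q.1 = k}) ^ ((ms + 1) - 2) :=
            mul_le_mul_right
              (pow_le_pow_of_le_one (zero_le) hp1 (show (ms+1)-2 ≤ ms by omega)) _
  | succ s =>
    cases ms with
    | zero => omega
    | succ ms =>
      rw [Gm_succ_succ d Q μ hprob hMRP]
      calc Q i {q | q.1 = k} * Gm d μ k k ms s
          ≤ 1 * (Cmax d Q * (Q k {q | q.1 = k}) ^ (ms - 1)) := by
            gcongr
            · exact prob_le_one
            · exact Gm_k_le d Q μ hQ hprob hMRP k s ms (by omega)
        _ = Cmax d Q * (Q k {q | q.1 = k}) ^ ((ms + 1) - 2) := by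
            have hms : ms - 1 = ms + 1 - 2 := by omega
            rw [one_mul, hms]

end Bounds

section Series
open scoped NNReal

lemma summable_poly_geom (D : ℕ) (c : ℝ) {r : ℝ} (hr : |r| < 1) :
    Summable (fun n : ℕ => ((n : ℝ) + c) ^ D * r ^ n) := by
  have : (fun n : ℕ => ((n : ℝ) + c) ^ D * r ^ n) =
      fun n : ℕ => ∑ j ∈ Finset.range (D + 1),
        ((n : ℝ) ^ j * r ^ n) * (c ^ (D - j) * (D.choose j)) := by
    funext n
    rw [add_pow, Finset.sum_mul]
    refine Finset.sum_congr rfl fun j _ => by ring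
  rw [this]
  refine summable_sum fun j _ => ?_
  have hs : Summable (fun n : ℕ => (n : ℝ) ^ j * r ^ n) :=
    summable_pow_mul_geometric_of_norm_lt_one j (by simpa using hr)
  exact hs.mul_right _

lemma tsum_shift3_ne_top (D : ℕ) {p : ℝ≥0∞} (hp : p < 1) :
    ∑' n : ℕ, ((n : ℝ≥0∞) + 3) ^ D * p ^ (n - 3) ≠ ⊤ := by
  have hpt : p ≠ ⊤ := (hp.trans_le le_top).ne
  set r : ℝ≥0 := p.toNNReal with hr
  have hpr : p = (r : ℝ≥0∞) := (ENNReal.coe_toNNReal hpt).symm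
  have hr1 : (r : ℝ) < 1 := by
    have : (r : ℝ≥0∞) < 1 := hpr ▸ hp
    exact_mod_cast this
  have hsum : Summable (fun n : ℕ => (((n : ℝ≥0) + 3) ^ D * r ^ (n - 3) : ℝ≥0)) := by
    rw [← NNReal.summable_coe]
    refine (summable_nat_add_iff 3).mp ?_
    have := summable_poly_geom D 6 (r := (r : ℝ))
      (by rw [abs_of_nonneg r.coe_nonneg]; exact hr1)
    refine Summable.congr this ?_
    intro n
    have : (((((n + 3 : ℕ) : ℝ≥0) + 3) ^ D * r ^ ((n + 3) - 3) : ℝ≥0) : ℝ)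
        = ((n : ℝ) + 6) ^ D * (r : ℝ) ^ n := by
      have h3 : (n + 3) - 3 = n := by omega
      rw [h3]
      push_cast
      ring
    rw [this]
  have hcoe : ∀ n : ℕ, ((n : ℝ≥0∞) + 3) ^ D * p ^ (n - 3)
      = ((((n : ℝ≥0) + 3) ^ D * r ^ (n - 3) : ℝ≥0) : ℝ≥0∞) := by
    intro n
    rw [hpr]
    push_cast
    rfl
  rw [tsum_congr hcoe]
  exact ENNReal.tsum_coe_ne_top_iff_summable.mpr hsum

lemma ofReal_sum_le (F : Finset ℕ) (x : ℕ → ℝ) :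
    ENNReal.ofReal (∑ s ∈ F, x s) ≤ ∑ s ∈ F, ENNReal.ofReal (x s) := by
  classical
  induction F using Finset.induction_on with
  | empty => simp
  | insert _ _ hnotmem ih =>
    rw [Finset.sum_insert hnotmem, Finset.sum_insert hnotmem]
    exact le_trans ENNReal.ofReal_add_le (add_le_add_right ih _)

lemma sum_pow_le (d : ℕ) (y : ℕ → ℝ≥0∞) (n : ℕ) :
    (∑ s ∈ Finset.range (n+1), y s) ^ d ≤
      ((n : ℝ≥0∞) + 1) ^ d * ∑ s ∈ Finset.range (n+1), (y s) ^ d := by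
  set M := (Finset.range (n+1)).sup y with hM
  have h1 : (∑ s ∈ Finset.range (n+1), y s) ≤ ((n : ℝ≥0∞) + 1) * M := by
    have := Finset.sum_le_card_nsmul (Finset.range (n+1)) y M
      (fun s hs => Finset.le_sup hs)
    rw [Finset.card_range, nsmul_eq_mul] at this
    simpa using this
  calc (∑ s ∈ Finset.range (n+1), y s) ^ d ≤ (((n : ℝ≥0∞) + 1) * M) ^ d :=
        pow_le_pow_left₀ (zero_le) h1 d
    _ = ((n : ℝ≥0∞) + 1) ^ d * M ^ d := mul_pow _ _ _
    _ ≤ ((n : ℝ≥0∞) + 1) ^ d * ∑ s ∈ Finset.range (n+1), (y s) ^ d := by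
        gcongr
        obtain ⟨s0, hs0, hMs0⟩ := Finset.exists_mem_eq_sup (Finset.range (n+1))
          Finset.nonempty_range_add_one y
        rw [hM, hMs0]
        exact Finset.single_le_sum (f := fun s => y s ^ d) (fun _ _ => zero_le) hs0

end Series

section Word
variable {m : ℕ}

lemma renV_word (k : Fin (m+1)) (ω : ℕ → Fin (m+1) × ℝ) :
    ∀ N, 1 ≤ N → (ω (N-1)).1 ≠ k →
      renV k ω (1 + ((Finset.Ico 1 N).filter (fun r => (ω (r-1)).1 ≠ k)).card) = N := by
  intro N
  induction N using Nat.strong_induction_on with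
  | _ N ih =>
    intro hN1 hNk
    by_cases hc : ((Finset.Ico 1 N).filter (fun r => (ω (r-1)).1 ≠ k)) = ∅
    · rw [hc]
      simp only [Finset.card_empty]
      rw [renV_one]
      apply le_antisymm
      · exact Nat.sInf_le ⟨hN1, hNk⟩
      · refine le_csInf ⟨N, hN1, hNk⟩ fun b hb => ?_
        by_contra hbN
        push_neg at hbN
        have hbF : b ∈ (Finset.Ico 1 N).filter (fun r => (ω (r-1)).1 ≠ k) := by
          rw [Finset.mem_filter, Finset.mem_Ico]
          exact ⟨⟨hb.1, hbN⟩, hb.2⟩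
        rw [hc] at hbF
        exact absurd hbF (Finset.notMem_empty b)
    · have hne : ((Finset.Ico 1 N).filter (fun r => (ω (r-1)).1 ≠ k)).Nonempty :=
        Finset.nonempty_of_ne_empty hc
      set N₀ := ((Finset.Ico 1 N).filter (fun r => (ω (r-1)).1 ≠ k)).max' hne with hN₀def
      have hN₀F : N₀ ∈ (Finset.Ico 1 N).filter (fun r => (ω (r-1)).1 ≠ k) :=
        Finset.max'_mem _ hne
      have hN₀ : (1 ≤ N₀ ∧ N₀ < N) ∧ (ω (N₀-1)).1 ≠ k := by
        simpa [Finset.mem_filter, Finset.mem_Ico] using hN₀F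
      have ihN₀ := ih N₀ hN₀.1.2 hN₀.1.1 hN₀.2
      have hFeq : (Finset.Ico 1 N).filter (fun r => (ω (r-1)).1 ≠ k) =
          insert N₀ ((Finset.Ico 1 N₀).filter (fun r => (ω (r-1)).1 ≠ k)) := by
        ext r
        simp only [Finset.mem_filter, Finset.mem_Ico, Finset.mem_insert]
        constructor
        · rintro ⟨⟨hr1, hrN⟩, hrk⟩
          rcases eq_or_lt_of_le (Finset.le_max'
            ((Finset.Ico 1 N).filter (fun r => (ω (r-1)).1 ≠ k)) r (by
            rw [Finset.mem_filter, Finset.mem_Ico]; exact ⟨⟨hr1, hrN⟩, hrk⟩)) with h | h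
          · exact Or.inl h
          · exact Or.inr ⟨⟨hr1, h⟩, hrk⟩
        · rintro (h | ⟨⟨hr1, hrN₀⟩, hrk⟩)
          · subst h; exact ⟨⟨hN₀.1.1, hN₀.1.2⟩, hN₀.2⟩
          · exact ⟨⟨hr1, lt_trans hrN₀ hN₀.1.2⟩, hrk⟩
      have hnotmem : N₀ ∉ (Finset.Ico 1 N₀).filter (fun r => (ω (r-1)).1 ≠ k) := by
        rw [Finset.mem_filter, Finset.mem_Ico]
        rintro ⟨⟨_, h⟩, _⟩
        exact absurd h (lt_irrefl N₀)
      rw [hFeq, Finset.card_insert_of_notMem hnotmem]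
      have harr : 1 + (((Finset.Ico 1 N₀).filter (fun r => (ω (r-1)).1 ≠ k)).card + 1) =
          (1 + ((Finset.Ico 1 N₀).filter (fun r => (ω (r-1)).1 ≠ k)).card) + 1 := by omega
      rw [harr, renV_succ]
      simp only [ihN₀]
      apply le_antisymm
      · exact Nat.sInf_le ⟨hN₀.1.2, hNk⟩
      · refine le_csInf ⟨N, hN₀.1.2, hNk⟩ fun b hb => ?_
        by_contra hbN
        push_neg at hbN
        have hb1 : N₀ < b := hb.1
        have hN01 : 1 ≤ N₀ := hN₀.1.1
        have hbF : b ∈ (Finset.Ico 1 N).filter (fun r => (ω (r-1)).1 ≠ k) := by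
          rw [Finset.mem_filter, Finset.mem_Ico]
          exact ⟨⟨by omega, hbN⟩, hb.2⟩
        have := Finset.le_max'
          ((Finset.Ico 1 N).filter (fun r => (ω (r-1)).1 ≠ k)) b hbF
        rw [← hN₀def] at this
        omega
end Word


/-- If the Markov renewal process `(J_n, X_n)` satisfies
(A) the state space is a communicating class, (B) no instantaneous transitions,
and (C_d) finite `d`-th sojourn moments, then for every `k ≠ 0` the reduced Markov
renewal process `(ₖJ_n, ₖX_n)` on `X \ {k}` also satisfies (A), (B) and (C_d). -/
theorem reduced_process_preserves_conditions {m : ℕ} (d : ℕ)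
    (Q : Fin (m + 1) → Measure (Fin (m + 1) × ℝ))
    (hQ : ∀ i, IsProbabilityMeasure (Q i))
    (μ : Fin (m + 1) → Measure (ℕ → Fin (m + 1) × ℝ))
    (hprob : ∀ i, IsProbabilityMeasure (μ i))
    (hMRP : ∀ (i : Fin (m + 1)) (A : Set (ℕ → Fin (m + 1) × ℝ)), MeasurableSet A →
      μ i A = ∫⁻ q, μ q.1 {ω | consStep q ω ∈ A} ∂ Q i)
    -- (A): the state space is a communicating class for the embedded chain
    (hA : ∀ i j : Fin (m + 1), ∃ n, 1 ≤ n ∧ 0 < μ i {ω | (ω (n - 1)).1 = j})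
    -- (B): no instantaneous transitions
    (hB : ∀ i, Q i {q | q.2 ≤ 0} = 0)
    -- (C_d): finite `d`-th moments of sojourn times
    (hC : ∀ i j, ∫⁻ q in {q | q.1 = j}, (ENNReal.ofReal q.2) ^ d ∂ Q i ≠ ⊤)
    (k : Fin (m + 1)) (hk : k ≠ 0) :
    -- (A) for the reduced process
    (∀ i j : Fin (m + 1), i ≠ k → j ≠ k →
      ∃ n, 1 ≤ n ∧ 0 < μ i {ω | redChain k ω n = j}) ∧
    -- (B) for the reduced process
    (∀ i : Fin (m + 1), i ≠ k → μ i {ω | redSojournSeq k ω 1 ≤ 0} = 0) ∧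
    -- (C_d) for the reduced process
    (∀ i j : Fin (m + 1), i ≠ k → j ≠ k →
      ∫⁻ ω in {ω | redChain k ω 1 = j},
        (ENNReal.ofReal (redSojournSeq k ω 1)) ^ d ∂ μ i ≠ ⊤) := by
  refine ⟨?_, ?_, ?_⟩
  · -- (A)
    intro i j hi hj
    obtain ⟨n, hn1, hpos⟩ := hA i j
    set E := fun (w : Fin n → Fin (m+1)) =>
      ({ω : ℕ → Fin (m+1) × ℝ | ∀ t : Fin n, (ω (t : ℕ)).1 = w t} ∩
        {ω : ℕ → Fin (m+1) × ℝ | (ω (n-1)).1 = j}) with hE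
    have hcover : {ω : ℕ → Fin (m+1) × ℝ | (ω (n-1)).1 = j} ⊆ ⋃ w, E w := fun ω hω =>
      Set.mem_iUnion.2 ⟨fun t => (ω (t : ℕ)).1, ⟨fun t => rfl, hω⟩⟩
    have hex : ∃ w, μ i (E w) ≠ 0 := by
      by_contra hall
      push_neg at hall
      have hle : μ i {ω : ℕ → Fin (m+1) × ℝ | (ω (n-1)).1 = j} ≤ ∑' w, μ i (E w) :=
        le_trans (measure_mono (μ := μ i) hcover) (measure_iUnion_le _)
      simp only [hall, tsum_zero] at hle
      exact absurd (lt_of_lt_of_le hpos hle) (lt_irrefl 0)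
    obtain ⟨w, hw⟩ := hex
    obtain ⟨ω₀, hω₀⟩ := nonempty_of_measure_ne_zero hw
    set c := ((Finset.Ico 1 n).filter (fun r => (ω₀ (r-1)).1 ≠ k)).card with hcdef
    refine ⟨1 + c, by omega, ?_⟩
    have hsub : E w ⊆ {ω : ℕ → Fin (m+1) × ℝ | redChain k ω (1+c) = j} := by
      intro ω hω
      have hfilter : (Finset.Ico 1 n).filter (fun r => (ω (r-1)).1 ≠ k) =
          (Finset.Ico 1 n).filter (fun r => (ω₀ (r-1)).1 ≠ k) := by
        apply Finset.filter_congr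
        intro r hr
        rw [Finset.mem_Ico] at hr
        have hrn : r - 1 < n := by omega
        have h1 : (ω (r-1)).1 = w ⟨r-1, hrn⟩ := hω.1 ⟨r-1, hrn⟩
        have h2 : (ω₀ (r-1)).1 = w ⟨r-1, hrn⟩ := hω₀.1 ⟨r-1, hrn⟩
        rw [h1, h2]
      have hNk : (ω (n-1)).1 ≠ k := by
        have := hω.2
        rw [Set.mem_setOf_eq] at this
        rw [this]
        exact hj
      have hren := renV_word k ω n hn1 hNk
      rw [hfilter] at hren
      show (ω (renV k ω (1+c) - 1)).1 = j
      rw [hren]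
      exact hω.2
    exact lt_of_lt_of_le (pos_iff_ne_zero.mpr hw) (measure_mono (μ := μ i) hsub)
  · -- (B)
    intro i _
    have hsub : {ω : ℕ → Fin (m+1) × ℝ | redSojournSeq k ω 1 ≤ 0} ⊆
        {ω : ℕ → Fin (m+1) × ℝ | renV k ω 1 = 0} ∪
          ⋃ s : ℕ, {ω : ℕ → Fin (m+1) × ℝ | (ω s).2 ≤ 0} := by
      intro ω hω
      by_contra hmem
      simp only [Set.mem_union, Set.mem_iUnion, Set.mem_setOf_eq, not_or, not_exists] at hmem
      obtain ⟨hT, hX⟩ := hmem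
      have heq : redSojournSeq k ω 1 = ∑ s ∈ Finset.Ico 0 (renV k ω 1), (ω s).2 := rfl
      rw [Set.mem_setOf_eq, heq, ← Finset.range_eq_Ico] at hω
      have hposs : 0 < ∑ s ∈ Finset.range (renV k ω 1), (ω s).2 :=
        Finset.sum_pos (fun s _ => lt_of_not_ge (hX s)) (Finset.nonempty_range_iff.mpr hT)
      exact absurd hω (not_le.mpr hposs)
    have h1 := muT0 Q μ hQ hprob hMRP hA k hk i
    have h2 : μ i (⋃ s : ℕ, {ω : ℕ → Fin (m+1) × ℝ | (ω s).2 ≤ 0}) = 0 := by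
      refine le_antisymm (le_trans (measure_iUnion_le _) ?_) (zero_le)
      simp [muXle0 Q μ hprob hMRP hB]
    exact le_antisymm (le_trans (measure_mono (μ := μ i) hsub)
      (le_trans (measure_union_le _ _) (by rw [h1, h2, add_zero]))) (zero_le)
  · -- (C)
    intro i j hi hj
    have hplt : Q k {q | q.1 = k} < 1 := p_lt_one Q μ hQ hprob hMRP hA k hk
    set p := Q k {q | q.1 = k} with hpdef
    set C := Cmax d Q with hCdef
    set cfun : ℕ → (ℕ → Fin (m+1) × ℝ) → ℝ≥0∞ := fun n ω =>
      if n = 0 then 1 else ((n : ℝ≥0∞)) ^ d * ∑ s ∈ Finset.range n,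
        (ENNReal.ofReal ((ω s).2)) ^ d with hcfun
    set g : ℕ → (ℕ → Fin (m+1) × ℝ) → ℝ≥0∞ := fun n =>
      Set.indicator {ω : ℕ → Fin (m+1) × ℝ | renV k ω 1 = n} (cfun n) with hg
    have hmeas_cfun : ∀ n, Measurable (cfun n) := by
      intro n
      cases n with
      | zero => exact measurable_const
      | succ n =>
        exact (Finset.measurable_sum _ fun s _ => meas_Gm_integrand d s).const_mul _
    have hmeas_g : ∀ n, Measurable (g n) := fun n =>
      (hmeas_cfun n).indicator (measurable_T_eq k n)
    -- pointwise bound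
    have hpoint : ∀ ω, (ENNReal.ofReal (redSojournSeq k ω 1)) ^ d ≤ ∑' n, g n ω := by
      intro ω
      refine le_trans ?_ (ENNReal.le_tsum (renV k ω 1))
      have hgv : g (renV k ω 1) ω = cfun (renV k ω 1) ω := by
        exact Set.indicator_of_mem
          (show ω ∈ {ω' : ℕ → Fin (m+1) × ℝ | renV k ω' 1 = renV k ω 1} from rfl)
          (cfun (renV k ω 1))
      rw [hgv]
      have heq : redSojournSeq k ω 1 = ∑ s ∈ Finset.Ico 0 (renV k ω 1), (ω s).2 := rfl
      cases hT : renV k ω 1 with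
      | zero =>
        have h0 : redSojournSeq k ω 1 = 0 := by
          rw [heq, hT]
          simp
        have hc0 : cfun 0 ω = 1 := rfl
        rw [h0, hc0, ENNReal.ofReal_zero]
        exact pow_le_one' (by norm_num) d
      | succ n =>
        have h1 : redSojournSeq k ω 1 = ∑ s ∈ Finset.range (n+1), (ω s).2 := by
          rw [heq, hT, ← Finset.range_eq_Ico]
        have hcs : cfun (n+1) ω = (((n+1 : ℕ) : ℝ≥0∞)) ^ d *
            ∑ s ∈ Finset.range (n+1), (ENNReal.ofReal ((ω s).2)) ^ d := rfl
        rw [h1, hcs]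
        calc (ENNReal.ofReal (∑ s ∈ Finset.range (n+1), (ω s).2)) ^ d
            ≤ (∑ s ∈ Finset.range (n+1), ENNReal.ofReal ((ω s).2)) ^ d :=
              pow_le_pow_left₀ (zero_le) (ofReal_sum_le _ _) d
          _ ≤ ((n : ℝ≥0∞) + 1) ^ d * ∑ s ∈ Finset.range (n+1),
                (ENNReal.ofReal ((ω s).2)) ^ d := sum_pow_le d _ n
          _ = (((n+1 : ℕ) : ℝ≥0∞)) ^ d * ∑ s ∈ Finset.range (n+1),
                (ENNReal.ofReal ((ω s).2)) ^ d := by push_cast; ring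
    -- termwise integral bound
    have hterm : ∀ n, ∫⁻ ω, g n ω ∂ μ i ≤ C * (((n : ℝ≥0∞) + 3) ^ (d+1) * p ^ (n - 3)) := by
      intro n
      cases n with
      | zero =>
        have h0 : ∫⁻ ω, g 0 ω ∂ μ i = 1 * μ i {ω : ℕ → Fin (m+1) × ℝ | renV k ω 1 = 0} :=
          lintegral_indicator_const (measurable_T_eq k 0) 1
        rw [h0, muT0 Q μ hQ hprob hMRP hA k hk i, mul_zero]
        exact zero_le
      | succ n =>
        have hTsub : {ω : ℕ → Fin (m+1) × ℝ | renV k ω 1 = n + 1} ⊆ Bset k n :=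
          fun ω hω => (charT_succ.mp hω).1
        have step1 : ∫⁻ ω, g (n+1) ω ∂ μ i ≤
            ∫⁻ ω in Bset k n, cfun (n+1) ω ∂ μ i := by
          have hind : ∫⁻ ω, g (n+1) ω ∂ μ i =
              ∫⁻ ω in {ω : ℕ → Fin (m+1) × ℝ | renV k ω 1 = n + 1}, cfun (n+1) ω ∂ μ i :=
            lintegral_indicator (measurable_T_eq k (n+1)) _
          rw [hind]
          exact lintegral_mono_set hTsub
        have step2 : ∫⁻ ω in Bset k n, cfun (n+1) ω ∂ μ i =
            (((n+1 : ℕ) : ℝ≥0∞)) ^ d * ∑ s ∈ Finset.range (n+1), Gm d μ k i n s := by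
          calc ∫⁻ ω in Bset k n, cfun (n+1) ω ∂ μ i
              = ∫⁻ ω in Bset k n, (((n+1 : ℕ) : ℝ≥0∞)) ^ d *
                  ∑ s ∈ Finset.range (n+1), (ENNReal.ofReal ((ω s).2)) ^ d ∂ μ i := rfl
            _ = (((n+1 : ℕ) : ℝ≥0∞)) ^ d * ∫⁻ ω in Bset k n,
                  ∑ s ∈ Finset.range (n+1), (ENNReal.ofReal ((ω s).2)) ^ d ∂ μ i :=
                lintegral_const_mul _ (Finset.measurable_sum _ fun s _ => meas_Gm_integrand d s)
            _ = (((n+1 : ℕ) : ℝ≥0∞)) ^ d * ∑ s ∈ Finset.range (n+1), Gm d μ k i n s := by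
                rw [lintegral_finset_sum _ fun s _ => meas_Gm_integrand d s]
                rfl
        have step3 : ∑ s ∈ Finset.range (n+1), Gm d μ k i n s ≤
            ((n+1 : ℕ) : ℝ≥0∞) * (C * p ^ (n - 2)) := by
          have := Finset.sum_le_card_nsmul (Finset.range (n+1)) (fun s => Gm d μ k i n s)
            (C * p ^ (n - 2)) (fun s hs => Gm_i_le d Q μ hQ hprob hMRP k i s n
              (by rw [Finset.mem_range] at hs; omega))
          rw [Finset.card_range, nsmul_eq_mul] at this
          exact this
        have hexp : n - 2 = (n + 1) - 3 := by omega
        calc ∫⁻ ω, g (n+1) ω ∂ μ i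
            ≤ (((n+1 : ℕ) : ℝ≥0∞)) ^ d * (((n+1 : ℕ) : ℝ≥0∞) * (C * p ^ (n - 2))) := by
              refine le_trans step1 ?_
              rw [step2]
              exact mul_le_mul_right step3 _
          _ = C * ((((n+1 : ℕ) : ℝ≥0∞)) ^ (d+1) * p ^ (n - 2)) := by
              rw [pow_succ]
              ring
          _ ≤ C * ((((n+1 : ℕ) : ℝ≥0∞) + 3) ^ (d+1) * p ^ ((n+1) - 3)) := by
              rw [← hexp]
              gcongr
              exact le_self_add
    -- combine
    have hfinal : ∫⁻ ω in {ω : ℕ → Fin (m+1) × ℝ | redChain k ω 1 = j},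
        (ENNReal.ofReal (redSojournSeq k ω 1)) ^ d ∂ μ i ≤
        C * ∑' n : ℕ, ((n : ℝ≥0∞) + 3) ^ (d+1) * p ^ (n - 3) := by
      calc ∫⁻ ω in {ω : ℕ → Fin (m+1) × ℝ | redChain k ω 1 = j},
            (ENNReal.ofReal (redSojournSeq k ω 1)) ^ d ∂ μ i
          ≤ ∫⁻ ω, (ENNReal.ofReal (redSojournSeq k ω 1)) ^ d ∂ μ i :=
            setLIntegral_le_lintegral _ _
        _ ≤ ∫⁻ ω, ∑' n, g n ω ∂ μ i := lintegral_mono hpoint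
        _ = ∑' n, ∫⁻ ω, g n ω ∂ μ i :=
            lintegral_tsum fun n => (hmeas_g n).aemeasurable
        _ ≤ ∑' n : ℕ, C * (((n : ℝ≥0∞) + 3) ^ (d+1) * p ^ (n - 3)) :=
            ENNReal.tsum_le_tsum hterm
        _ = C * ∑' n : ℕ, ((n : ℝ≥0∞) + 3) ^ (d+1) * p ^ (n - 3) :=
            ENNReal.tsum_mul_left
    exact ne_top_of_le_ne_top
      (ENNReal.mul_ne_top (Cmax_ne_top d Q hC) (tsum_shift3_ne_top (d+1) hplt)) hfinal
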